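/- If the final zone F of M_•^{F₁,F₂} is not contained in ([m]×{0}) ∪ ({0}×[n]) (i.e., F contains a cell (i,j) with i ≠ 0 and j ≠ 0), then a nonempty state T of M_•^{F₁,F₂} is accessible if and only if T is valid. -/

import Mathlib

/-- The final zone `F = (F₁×[n]) • ([m]×F₂)` determined by a binary Boolean
function `b` and final sets `F₁`, `F₂`. -/
def finalZone {m n : ℕ} (b : Bool → Bool → Bool)
    (F₁ : Finset (Fin m)) (F₂ : Finset (Fin n)) : Set (Fin m × Fin n) :=
  {p | b (decide (p.1 ∈ F₁)) (decide (p.2 ∈ F₂)) = true}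

/-- The action of a pair of transformations on a tableau:
`T·(f,g) = {(f i, g j) | (i,j) ∈ T}`. -/
def act {m n : ℕ} (a : (Fin m → Fin m) × (Fin n → Fin n))
    (T : Set (Fin m × Fin n)) : Set (Fin m × Fin n) :=
  (fun p => (a.1 p.1, a.2 p.2)) '' T

open Classical in
/-- One transition of the automaton `M_•^{F₁,F₂}` on tableaux: on `∅` the
letter `(f,g)` produces `{(f 0, g 0)}`, on a nonempty tableau it produces
`T·(f,g)`; in both cases the cross `(0,0)` is added whenever the resulting
tableau meets the final zone `F`. -/
noncomputable def mstep {m n : ℕ} [NeZero m] [NeZero n]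
    (F : Set (Fin m × Fin n)) (a : (Fin m → Fin m) × (Fin n → Fin n))
    (T : Set (Fin m × Fin n)) : Set (Fin m × Fin n) :=
  let T' := if T = ∅ then ({(a.1 0, a.2 0)} : Set (Fin m × Fin n)) else act a T
  if (T' ∩ F).Nonempty then insert ((0 : Fin m), (0 : Fin n)) T' else T'

/-- The extended transition function `δ^w` of `M_•^{F₁,F₂}`. -/
noncomputable def mrun {m n : ℕ} [NeZero m] [NeZero n]
    (F : Set (Fin m × Fin n)) (w : List ((Fin m → Fin m) × (Fin n → Fin n)))
    (T : Set (Fin m × Fin n)) : Set (Fin m × Fin n) :=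
  w.foldl (fun T a => mstep F a T) T


section Aux
open Classical
variable {m n : ℕ} [NeZero m] [NeZero n]

private lemma mstep_valid (F : Set (Fin m × Fin n)) (a : (Fin m → Fin m) × (Fin n → Fin n))
    (T : Set (Fin m × Fin n)) :
    mstep F a T ∩ F = ∅ ∨ ((0 : Fin m), (0 : Fin n)) ∈ mstep F a T := by
  simp only [mstep]
  by_cases h : ((if T = ∅ then ({(a.1 0, a.2 0)} : Set (Fin m × Fin n)) else act a T) ∩ F).Nonempty
  · right; rw [if_pos h]; exact Set.mem_insert _ _
  · left; rw [if_neg h]; exact Set.not_nonempty_iff_eq_empty.mp h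

private lemma mrun_valid (F : Set (Fin m × Fin n)) (w : List ((Fin m → Fin m) × (Fin n → Fin n)))
    (T : Set (Fin m × Fin n))
    (hT : T ∩ F = ∅ ∨ ((0 : Fin m), (0 : Fin n)) ∈ T) :
    mrun F w T ∩ F = ∅ ∨ ((0 : Fin m), (0 : Fin n)) ∈ mrun F w T := by
  induction w generalizing T with
  | nil => exact hT
  | cons a w ih => exact ih (mstep F a T) (mstep_valid F a T)

private lemma exists_perm {k : ℕ} [NeZero k] (u w t : Fin k) (huw : u ≠ w) (ht : t ≠ 0) :
    ∃ σ : Equiv.Perm (Fin k), σ u = t ∧ σ w = 0 := by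
  refine ⟨(Equiv.swap u t).trans (Equiv.swap ((Equiv.swap u t) w) 0), ?_, ?_⟩
  · have h1 : Equiv.swap u t w ≠ t := by
      intro h; exact huw (Equiv.injective _ (by rw [h, Equiv.swap_apply_left])).symm
    simp only [Equiv.trans_apply, Equiv.swap_apply_left]
    exact Equiv.swap_apply_of_ne_of_ne (Ne.symm h1) ht
  · simp only [Equiv.trans_apply, Equiv.swap_apply_left]

private lemma exists_back {k : ℕ} [NeZero k] (σ : Equiv.Perm (Fin k)) (x w : Fin k) (hw : σ w = 0) :
    ∃ f : Fin k → Fin k, f 0 = x ∧ ∀ s, s ≠ w → f (σ s) = s := by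
  refine ⟨fun s => if s = 0 then x else σ.symm s, by simp, ?_⟩
  intro s hs
  have h0 : σ s ≠ 0 := fun h => hs (σ.injective (h.trans hw.symm))
  simp only [if_neg h0, Equiv.symm_apply_apply]


open Classical in
private lemma mstep_of_ne (F : Set (Fin m × Fin n)) (a : (Fin m → Fin m) × (Fin n → Fin n))
    (T : Set (Fin m × Fin n)) (hT : T ≠ ∅) :
    mstep F a T = if ((act a T) ∩ F).Nonempty
      then insert ((0 : Fin m), (0 : Fin n)) (act a T) else act a T := by
  simp only [mstep]
  rw [if_neg hT]

open Classical in
private lemma mstep_empty (F : Set (Fin m × Fin n)) (a : (Fin m → Fin m) × (Fin n → Fin n)) :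
    mstep F a (∅ : Set (Fin m × Fin n))
      = if (({(a.1 0, a.2 0)} : Set (Fin m × Fin n)) ∩ F).Nonempty
        then insert ((0 : Fin m), (0 : Fin n)) ({(a.1 0, a.2 0)} : Set (Fin m × Fin n))
        else ({(a.1 0, a.2 0)} : Set (Fin m × Fin n)) := by
  simp only [mstep, ite_true]

private lemma choice_lemma (i0 : Fin m) (j0 : Fin n) (hi : i0 ≠ 0) (hj : j0 ≠ 0)
    (T : Set (Fin m × Fin n)) (p q : Fin m × Fin n) (hp : p ∈ T) (hq : q ∈ T) (hpq : p ≠ q) :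
    ∃ e ∈ T, e ≠ ((0 : Fin m), (0 : Fin n)) ∧ ∃ r ∈ T \ {e},
      (∃ w, w ≠ r.1 ∧ (w = e.1 ∨ ∀ s ∈ T \ {e}, s.1 ≠ w)) ∧
      (∃ z, z ≠ r.2 ∧ (z = e.2 ∨ ∀ s ∈ T \ {e}, s.2 ≠ z)) := by
  classical
  obtain ⟨e₀, he₀T, he₀⟩ : ∃ e₀ ∈ T, e₀ ≠ ((0 : Fin m), (0 : Fin n)) := by
    by_cases h : p = ((0 : Fin m), (0 : Fin n))
    · exact ⟨q, hq, fun hq0 => hpq (h.trans hq0.symm)⟩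
    · exact ⟨p, hp, h⟩
  by_cases H : ∃ r ∈ T \ {e₀}, r.1 ≠ e₀.1 ∧ r.2 ≠ e₀.2
  · obtain ⟨r, hr, hr1, hr2⟩ := H
    exact ⟨e₀, he₀T, he₀, r, hr, ⟨e₀.1, Ne.symm hr1, Or.inl rfl⟩,
      ⟨e₀.2, Ne.symm hr2, Or.inl rfl⟩⟩
  · push_neg at H
    have hline : ∀ r ∈ T, r.1 = e₀.1 ∨ r.2 = e₀.2 := by
      intro r hrT
      by_cases hre : r = e₀
      · left; rw [hre]
      · by_cases h1 : r.1 = e₀.1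
        · left; exact h1
        · right; exact H r ⟨hrT, hre⟩ h1
    by_cases H2 : (∃ r ∈ T, r.1 ≠ e₀.1) ∧ (∃ s ∈ T, s.2 ≠ e₀.2)
    · obtain ⟨⟨r, hrT, hr1⟩, ⟨s, hsT, hs2⟩⟩ := H2
      have hr2 : r.2 = e₀.2 := (hline r hrT).resolve_left hr1
      have hs1 : s.1 = e₀.1 := (hline s hsT).resolve_right hs2
      have hrs : r ≠ s := fun h => hr1 (by rw [h, hs1])
      by_cases hs0 : s = ((0 : Fin m), (0 : Fin n))
      · -- s = (0,0), so e₀.1 = 0 and e₀.2 ≠ 0; take e := r, witness s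
        have he01 : e₀.1 = 0 := by rw [← hs1, hs0]
        have he02 : e₀.2 ≠ 0 := fun h => hs2 (by rw [hs0, h])
        have hrne : r ≠ ((0 : Fin m), (0 : Fin n)) := by
          intro h; exact he02 (by rw [← hr2, h])
        refine ⟨r, hrT, hrne, s, ⟨hsT, hrs.symm⟩, ⟨r.1, ?_, Or.inl rfl⟩,
          ⟨r.2, ?_, Or.inl rfl⟩⟩
        · rw [hs1]; exact hr1
        · intro h; exact he02 (by rw [← hr2, h, hs0])
      · -- s ≠ (0,0): take e := s, witness r
        refine ⟨s, hsT, hs0, r, ⟨hrT, hrs⟩, ⟨s.1, ?_, Or.inl rfl⟩,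
          ⟨s.2, ?_, Or.inl rfl⟩⟩
        · rw [hs1]; exact Ne.symm hr1
        · rw [hr2]; exact hs2
    · rw [not_and_or] at H2
      push_neg at H2
      obtain ⟨o, hoT, hoe⟩ : ∃ o ∈ T, o ≠ e₀ := by
        by_cases h : p = e₀
        · exact ⟨q, hq, fun h' => hpq (h.trans h'.symm)⟩
        · exact ⟨p, hp, h⟩
      rcases H2 with hrow | hcol
      · -- all cells in row e₀.1
        have ho1 : o.1 = e₀.1 := hrow o hoT
        have ho2 : o.2 ≠ e₀.2 := fun h => hoe (Prod.ext ho1 h)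
        refine ⟨e₀, he₀T, he₀, o, ⟨hoT, hoe⟩,
          ⟨if e₀.1 = 0 then i0 else 0, ?_, Or.inr ?_⟩,
          ⟨e₀.2, Ne.symm ho2, Or.inl rfl⟩⟩
        · rw [ho1]; split
          · rename_i h; rw [h]; exact hi
          · rename_i h; exact fun h' => h h'.symm
        · intro s hs
          rw [hrow s hs.1]
          split
          · rename_i h; rw [h]; exact fun h' => hi h'.symm
          · rename_i h; exact h
      · -- all cells in column e₀.2
        have ho2 : o.2 = e₀.2 := hcol o hoT
        have ho1 : o.1 ≠ e₀.1 := fun h => hoe (Prod.ext h ho2)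
        refine ⟨e₀, he₀T, he₀, o, ⟨hoT, hoe⟩,
          ⟨e₀.1, Ne.symm ho1, Or.inl rfl⟩,
          ⟨if e₀.2 = 0 then j0 else 0, ?_, Or.inr ?_⟩⟩
        · rw [ho2]; split
          · rename_i h; rw [h]; exact hj
          · rename_i h; exact fun h' => h h'.symm
        · intro s hs
          rw [hcol s hs.1]
          split
          · rename_i h; rw [h]; exact fun h' => hj h'.symm
          · rename_i h; exact h

private lemma reach (F : Set (Fin m × Fin n)) (c : Fin m × Fin n) (hcF : c ∈ F)
    (hc1 : c.1 ≠ 0) (hc2 : c.2 ≠ 0) :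
    ∀ K (T : Set (Fin m × Fin n)), T.ncard ≤ K → T.Nonempty →
      (T ∩ F = ∅ ∨ ((0 : Fin m), (0 : Fin n)) ∈ T) → ∃ w, mrun F w ∅ = T := by
  intro K
  induction K with
  | zero =>
    intro T hcard hne _
    exact absurd ((Set.ncard_eq_zero (Set.toFinite T)).mp (Nat.le_zero.mp hcard))
      hne.ne_empty
  | succ K ih =>
    intro T hcard hne hvalid
    by_cases h1 : T.ncard ≤ 1
    · -- singleton case
      have hone : T.ncard = 1 := le_antisymm h1 (by
        rw [Nat.one_le_iff_ne_zero]
        exact fun h => hne.ne_empty ((Set.ncard_eq_zero (Set.toFinite T)).mp h))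
      obtain ⟨e, rfl⟩ := Set.ncard_eq_one.mp hone
      refine ⟨[(fun _ => e.1, fun _ => e.2)], ?_⟩
      show mstep F (fun _ => e.1, fun _ => e.2) ∅ = {e}
      rw [mstep_empty]
      show (if (({e} : Set (Fin m × Fin n)) ∩ F).Nonempty
        then insert ((0 : Fin m), (0 : Fin n)) ({e} : Set (Fin m × Fin n))
        else ({e} : Set (Fin m × Fin n))) = {e}
      rcases hvalid with hv | hv
      · rw [if_neg (by rw [hv]; exact Set.not_nonempty_empty)]
      · by_cases hF' : (({e} : Set (Fin m × Fin n)) ∩ F).Nonempty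
        · rw [if_pos hF', Set.insert_eq_self.mpr hv]
        · rw [if_neg hF']
    · -- inductive case
      push_neg at h1
      obtain ⟨p, q, hp, hq, hpq⟩ := (Set.one_lt_ncard_iff (Set.toFinite T)).mp h1
      obtain ⟨e, heT, hene, r, hrS, ⟨w, hwr, hwor⟩, ⟨z, hzr, hzor⟩⟩ :=
        choice_lemma c.1 c.2 hc1 hc2 T p q hp hq hpq
      have hSne : (T \ {e}).Nonempty := ⟨r, hrS⟩
      have hcardS : (T \ {e}).ncard ≤ K := by
        have := Set.ncard_diff_singleton_of_mem heT
        omega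
      have hSvalid : (T \ {e}) ∩ F = ∅ ∨ ((0 : Fin m), (0 : Fin n)) ∈ T \ {e} := by
        rcases hvalid with hv | hv
        · left
          rw [← Set.subset_empty_iff, ← hv]
          exact Set.inter_subset_inter_left F Set.diff_subset
        · exact Or.inr ⟨hv, fun h => hene (Set.mem_singleton_iff.mp h).symm⟩
      obtain ⟨w0, hw0⟩ := ih (T \ {e}) hcardS hSne hSvalid
      obtain ⟨σ, hσ1, hσ2⟩ := exists_perm r.1 w c.1 (Ne.symm hwr) hc1
      obtain ⟨τ, hτ1, hτ2⟩ := exists_perm r.2 z c.2 (Ne.symm hzr) hc2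
      obtain ⟨f₂, hf₂0, hf₂⟩ := exists_back σ e.1 w hσ2
      obtain ⟨g₂, hg₂0, hg₂⟩ := exists_back τ e.2 z hτ2
      refine ⟨w0 ++ [(⇑σ, ⇑τ), (f₂, g₂)], ?_⟩
      have hmr : mrun F (w0 ++ [(⇑σ, ⇑τ), (f₂, g₂)]) ∅
          = mstep F (f₂, g₂) (mstep F (⇑σ, ⇑τ) (mrun F w0 ∅)) := by
        simp [mrun, List.foldl_append]
      rw [hmr, hw0]
      -- step 1 : create the cross
      have hstep1 : mstep F (⇑σ, ⇑τ) (T \ {e})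
          = insert ((0 : Fin m), (0 : Fin n)) (act (⇑σ, ⇑τ) (T \ {e})) := by
        rw [mstep_of_ne F _ _ hSne.ne_empty]
        rw [if_pos (show ((act (⇑σ, ⇑τ) (T \ {e})) ∩ F).Nonempty from
          ⟨c, ⟨r, hrS, by show (σ r.1, τ r.2) = c; rw [hσ1, hτ1]⟩, hcF⟩)]
      rw [hstep1]
      -- step 2 : move everything back and the cross to e
      have hback : act (f₂, g₂) (act (⇑σ, ⇑τ) (T \ {e})) = T \ {e} := by
        unfold act
        rw [← Set.image_comp]
        have hcong : ∀ x ∈ T \ {e},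
            ((fun p : Fin m × Fin n => (f₂ p.1, g₂ p.2)) ∘
              (fun p : Fin m × Fin n => (σ p.1, τ p.2))) x = x := by
          intro x hx
          show (f₂ (σ x.1), g₂ (τ x.2)) = x
          have h1 : f₂ (σ x.1) = x.1 := by
            by_cases hxw : x.1 = w
            · rcases hwor with hwe | hfree
              · rw [hxw, hσ2, hf₂0, ← hwe]
              · exact absurd hxw (hfree x hx)
            · exact hf₂ x.1 hxw
          have h2 : g₂ (τ x.2) = x.2 := by
            by_cases hxz : x.2 = z
            · rcases hzor with hze | hfree
              · rw [hxz, hτ2, hg₂0, ← hze]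
              · exact absurd hxz (hfree x hx)
            · exact hg₂ x.2 hxz
          rw [h1, h2]
        rw [Set.image_congr hcong, Set.image_id']
      have hT'eq : act (f₂, g₂)
          (insert ((0 : Fin m), (0 : Fin n)) (act (⇑σ, ⇑τ) (T \ {e}))) = T := by
        have him : act (f₂, g₂)
            (insert ((0 : Fin m), (0 : Fin n)) (act (⇑σ, ⇑τ) (T \ {e})))
            = insert (f₂ 0, g₂ 0) (act (f₂, g₂) (act (⇑σ, ⇑τ) (T \ {e}))) := by
          unfold act
          rw [Set.image_insert_eq]
        rw [him, hback, hf₂0, hg₂0, Prod.mk.eta, Set.insert_diff_singleton,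
          Set.insert_eq_self.mpr heT]
      -- final step
      have hins : insert ((0 : Fin m), (0 : Fin n)) (act (⇑σ, ⇑τ) (T \ {e})) ≠ ∅ :=
        (Set.insert_nonempty _ _).ne_empty
      rw [mstep_of_ne F _ _ hins, hT'eq]
      rcases hvalid with hv | hv
      · rw [if_neg (by rw [hv]; exact Set.not_nonempty_empty)]
      · by_cases hF' : (T ∩ F).Nonempty
        · rw [if_pos hF', Set.insert_eq_self.mpr hv]
        · rw [if_neg hF']
end Aux

/-- If the final zone of `M_•^{F₁,F₂}` contains a cell `(i,j)` with `i ≠ 0` and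
`j ≠ 0`, then a nonempty tableau is accessible if and only if it is valid. -/
theorem accessible_iff_valid (m n : ℕ) [NeZero m] [NeZero n]
    (b : Bool → Bool → Bool) (F₁ : Finset (Fin m)) (F₂ : Finset (Fin n))
    (hF : ∃ p ∈ finalZone b F₁ F₂, p.1 ≠ 0 ∧ p.2 ≠ 0)
    (T : Set (Fin m × Fin n)) (hT : T.Nonempty) :
    (∃ w, mrun (finalZone b F₁ F₂) w ∅ = T) ↔
      (T ∩ finalZone b F₁ F₂ = ∅ ∨ ((0 : Fin m), (0 : Fin n)) ∈ T) := by
  obtain ⟨c, hcF, hc1, hc2⟩ := hF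
  constructor
  · rintro ⟨w, rfl⟩
    exact mrun_valid (finalZone b F₁ F₂) w ∅ (Or.inl (Set.empty_inter _))
  · intro hvalid
    exact reach (finalZone b F₁ F₂) c hcF hc1 hc2 T.ncard T le_rfl hT hvalid
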